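/- Let Δ ⊂ ℝ^n be the standard simplex, let f : Δ → ℝ be continuous with minimizer set M = argmin_{ω∈Δ} f(ω), and let g : Δ → ℝ be continuous. Then lim_{s→0⁺} (min_{ω∈Δ}(f(ω)+s·g(ω)) − min_{ω∈Δ} f(ω))/s = min_{ω∈M} g(ω). -/

import Mathlib

open Filter

theorem stmt14 {n : ℕ} (f g : (Fin n → ℝ) → ℝ)
    (hf : ContinuousOn f (stdSimplex ℝ (Fin n)))
    (hg : ContinuousOn g (stdSimplex ℝ (Fin n))) :
    Tendsto
      (fun s : ℝ =>
        (sInf ((fun ω => f ω + s * g ω) '' stdSimplex ℝ (Fin n)) -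
          sInf (f '' stdSimplex ℝ (Fin n))) / s)
      (nhdsWithin 0 (Set.Ioi 0))
      (nhds (sInf (g ''
        {ω | ω ∈ stdSimplex ℝ (Fin n) ∧ ∀ ω' ∈ stdSimplex ℝ (Fin n), f ω ≤ f ω'}))) := by
  set Δ := stdSimplex ℝ (Fin n) with hΔdef
  rcases Δ.eq_empty_or_nonempty with hΔ | hne
  · have hM : {ω | ω ∈ Δ ∧ ∀ ω' ∈ Δ, f ω ≤ f ω'} = (∅ : Set (Fin n → ℝ)) := by
      rw [Set.eq_empty_iff_forall_notMem]
      intro x hx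
      have := hx.1
      rw [hΔ] at this
      exact this
    rw [hM, hΔ]
    simp only [Set.image_empty, Real.sInf_empty, sub_zero, zero_div]
    exact tendsto_const_nhds
  · have hK : IsCompact Δ := isCompact_stdSimplex _ _
    obtain ⟨x0, hx0, hx0min⟩ := hK.exists_isMinOn hne hf
    have hx0min' : ∀ ω ∈ Δ, f x0 ≤ f ω := fun ω hω => isMinOn_iff.mp hx0min ω hω
    set M := {ω | ω ∈ Δ ∧ ∀ ω' ∈ Δ, f ω ≤ f ω'} with hMdef
    have hx0M : x0 ∈ M := ⟨hx0, hx0min'⟩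
    have hMsub : M ⊆ Δ := fun ω h => h.1
    have hMeq : M = Δ ∩ f ⁻¹' Set.Iic (f x0) := by
      ext ω
      constructor
      · rintro ⟨h1, h2⟩; exact ⟨h1, h2 x0 hx0⟩
      · rintro ⟨h1, h2⟩
        exact ⟨h1, fun ω' hω' => le_trans h2 (hx0min' ω' hω')⟩
    have hMcomp : IsCompact M := by
      rw [hMeq]
      exact hK.of_isClosed_subset
        (hf.preimage_isClosed_of_isClosed (isClosed_stdSimplex _ _) isClosed_Iic)
        Set.inter_subset_left
    obtain ⟨y0, hy0, hy0min⟩ := hMcomp.exists_isMinOn ⟨x0, hx0M⟩ (hg.mono hMsub)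
    have hy0min' : ∀ ω ∈ M, g y0 ≤ g ω := fun ω hω => isMinOn_iff.mp hy0min ω hω
    have hfy0 : f y0 = f x0 := le_antisymm (hy0.2 x0 hx0) (hx0min' y0 hy0.1)
    obtain ⟨b, hb, hbmin⟩ := hK.exists_isMinOn hne hg
    have hbmin' : ∀ ω ∈ Δ, g b ≤ g ω := fun ω hω => isMinOn_iff.mp hbmin ω hω
    have hInf_f : sInf (f '' Δ) = f x0 := by
      apply IsLeast.csInf_eq
      exact ⟨⟨x0, hx0, rfl⟩, by rintro y ⟨z, hz, rfl⟩; exact hx0min' z hz⟩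
    have hInf_g : sInf (g '' M) = g y0 := by
      apply IsLeast.csInf_eq
      exact ⟨⟨y0, hy0, rfl⟩, by rintro y ⟨z, hz, rfl⟩; exact hy0min' z hz⟩
    rw [hInf_f, hInf_g]
    rw [Metric.tendsto_nhdsWithin_nhds]
    intro ε hε
    -- key: uniform lower bound
    have hkey : ∃ δ > (0:ℝ), ∀ s : ℝ, 0 < s → s < δ →
        ∀ ω ∈ Δ, f x0 + s * (g y0 - ε/2) ≤ f ω + s * g ω := by
      set A := Δ ∩ g ⁻¹' Set.Iic (g y0 - ε/2) with hAdef
      rcases A.eq_empty_or_nonempty with hA | hAne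
      · refine ⟨1, one_pos, fun s hs _ ω hω => ?_⟩
        have hgω : g y0 - ε/2 < g ω := by
          by_contra h
          push_neg at h
          have hmem : ω ∈ A := ⟨hω, h⟩
          rw [hA] at hmem
          exact hmem
        nlinarith [hx0min' ω hω]
      · have hAcomp : IsCompact A := hK.of_isClosed_subset
          (hg.preimage_isClosed_of_isClosed (isClosed_stdSimplex _ _) isClosed_Iic)
          Set.inter_subset_left
        obtain ⟨a, ha, hamin⟩ := hAcomp.exists_isMinOn hAne (hf.mono Set.inter_subset_left)
        have hamin' : ∀ ω ∈ A, f a ≤ f ω := fun ω hω => isMinOn_iff.mp hamin ω hω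
        have haΔ : a ∈ Δ := ha.1
        have hfa : f x0 < f a := by
          rcases lt_or_eq_of_le (hx0min' a haΔ) with h | h
          · exact h
          · exfalso
            have haM : a ∈ M := ⟨haΔ, fun ω' hω' => h ▸ hx0min' ω' hω'⟩
            have := hy0min' a haM
            have := ha.2
            simp only [Set.mem_preimage, Set.mem_Iic] at this
            linarith
        set δ0 := f a - f x0 with hδ0
        have hδ0pos : 0 < δ0 := by simp [hδ0]; linarith
        set C := max (g y0 - ε/2 - g b) 1 with hC
        have hCpos : 0 < C := lt_of_lt_of_le one_pos (le_max_right _ _)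
        refine ⟨δ0 / C, div_pos hδ0pos hCpos, fun s hs hsδ ω hω => ?_⟩
        by_cases hωA : ω ∈ A
        · have h1 : f a ≤ f ω := hamin' ω hωA
          have h2 : g b ≤ g ω := hbmin' ω hω
          have h3 : s * (g y0 - ε/2 - g b) ≤ s * C :=
            mul_le_mul_of_nonneg_left (le_max_left _ _) hs.le
          have h4 : s * C < δ0 := (lt_div_iff₀ hCpos).mp hsδ
          nlinarith
        · have hgω : g y0 - ε/2 < g ω := by
            by_contra h
            push_neg at h
            exact hωA ⟨hω, h⟩
          nlinarith [hx0min' ω hω]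
    obtain ⟨δ, hδpos, hδ⟩ := hkey
    refine ⟨δ, hδpos, fun s hs hsd => ?_⟩
    have hspos : (0:ℝ) < s := hs
    have hsδ : s < δ := by
      rw [Real.dist_eq, sub_zero, abs_of_pos hspos] at hsd
      exact hsd
    have hlb := hδ s hspos hsδ
    have hbdd : BddBelow ((fun ω => f ω + s * g ω) '' Δ) := by
      refine ⟨f x0 + s * (g y0 - ε/2), ?_⟩
      rintro y ⟨z, hz, rfl⟩
      exact hlb z hz
    have hlow : f x0 + s * (g y0 - ε/2) ≤ sInf ((fun ω => f ω + s * g ω) '' Δ) := by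
      apply le_csInf (hne.image _)
      rintro y ⟨z, hz, rfl⟩
      exact hlb z hz
    have hup : sInf ((fun ω => f ω + s * g ω) '' Δ) ≤ f x0 + s * g y0 := by
      have : sInf ((fun ω => f ω + s * g ω) '' Δ) ≤ f y0 + s * g y0 :=
        csInf_le hbdd ⟨y0, hMsub hy0, rfl⟩
      rw [hfy0] at this
      exact this
    have hq1 : (sInf ((fun ω => f ω + s * g ω) '' Δ) - f x0) / s ≤ g y0 := by
      rw [div_le_iff₀ hspos]; nlinarith
    have hq2 : g y0 - ε / 2 ≤ (sInf ((fun ω => f ω + s * g ω) '' Δ) - f x0) / s := by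
      rw [le_div_iff₀ hspos]; nlinarith
    rw [Real.dist_eq, abs_lt]
    constructor <;> linarith
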